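/- Let G be a finite p-group such that the commutator subgroup [G,G] is contained in the center Z(G) and is cyclic. Then the commutator map induces a nondegenerate alternating bilinear form on Q = G/Z(G); in particular, the order of G/Z(G) is a perfect square. -/

import Mathlib

open scoped commutatorElement

open AddSubgroup in
-- every element of order dividing m in ZMod n lies in the multiples of c, if c has order m
private lemma stmt8_torsion_mem {n m : ℕ} (hn : n ≠ 0) (hm : m ∣ n) (hm0 : m ≠ 0)
    {c : ZMod n} (hc : addOrderOf c = m) {d : ZMod n} (hd : addOrderOf d ∣ m) :
    d ∈ zmultiples c := by
  haveI : NeZero n := ⟨hn⟩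
  set μ : ZMod n →+ ZMod n := AddMonoidHom.mk' (fun z => m • z) (fun a b => smul_add m a b) with hμ
  have hker : zmultiples c ≤ μ.ker := by
    rintro z ⟨a, rfl⟩
    simp only [AddMonoidHom.mem_ker, hμ, AddMonoidHom.mk'_apply]
    rw [smul_comm]
    have : m • c = 0 := by rw [← hc]; exact addOrderOf_nsmul_eq_zero c
    rw [this, smul_zero]
  have hrange : μ.range = zmultiples ((m : ZMod n)) := by
    ext z
    constructor
    · rintro ⟨w, rfl⟩
      simp only [hμ, AddMonoidHom.mk'_apply]
      obtain ⟨a, rfl⟩ := ZMod.intCast_surjective w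
      exact ⟨a, by push_cast [zsmul_eq_mul, nsmul_eq_mul]; ring⟩
    · rintro ⟨a, rfl⟩
      exact ⟨(a : ZMod n), by simp only [hμ, AddMonoidHom.mk'_apply]; rw [zsmul_eq_mul, nsmul_eq_mul]; ring⟩
  have hcards : Nat.card (ZMod n) = Nat.card (ZMod n ⧸ μ.ker) * Nat.card μ.ker :=
    AddSubgroup.card_eq_card_quotient_mul_card_addSubgroup μ.ker
  have hq : Nat.card (ZMod n ⧸ μ.ker) = Nat.card μ.range :=
    Nat.card_congr (QuotientAddGroup.quotientKerEquivRange μ).toEquiv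
  have hcr : Nat.card μ.range = n / m := by
    rw [hrange, Nat.card_zmultiples, ZMod.addOrderOf_coe m hn, Nat.gcd_eq_right hm]
  have hck : Nat.card μ.ker = m := by
    have hnz : Nat.card (ZMod n) = n := Nat.card_zmod n
    rw [hnz, hq, hcr] at hcards
    obtain ⟨k, rfl⟩ := hm
    rw [Nat.mul_div_cancel_left _ (Nat.pos_of_ne_zero hm0)] at hcards
    have hk0 : k ≠ 0 := by rintro rfl; simp at hn
    have := Nat.eq_of_mul_eq_mul_left (Nat.pos_of_ne_zero hk0) (by linarith [hcards] : k * Nat.card μ.ker = k * m)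
    · exact this
  have : zmultiples c = μ.ker := by
    apply AddSubgroup.eq_of_le_of_card_ge hker
    rw [hck, Nat.card_zmultiples, hc]
  rw [this]
  simp only [AddMonoidHom.mem_ker, hμ, AddMonoidHom.mk'_apply]
  exact addOrderOf_dvd_iff_nsmul_eq_zero.mp hd


open AddSubgroup in
private lemma stmt8_card_sq_aux {p : ℕ} (hp : p.Prime) (N : ℕ) :
    ∀ (n e : ℕ), n = p ^ e → ∀ (M : Type u) [AddCommGroup M] [Finite M],
      Nat.card M ≤ N →
      ∀ β : M →+ M →+ ZMod n,
        (∀ x, β x x = 0) → (∀ x : M, (∀ y, β x y = 0) → x = 0) →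
        ∃ r : ℕ, Nat.card M = r ^ 2 := by
  induction N with
  | zero =>
    intro n e hn M _ _ hcard β halt hnd
    have := Nat.card_pos (α := M)
    omega
  | succ N ih =>
    intro n e hn M _ _ hcard β halt hnd
    have hn0 : n ≠ 0 := by rw [hn]; exact pow_ne_zero e hp.pos.ne'
    haveI : NeZero n := ⟨hn0⟩
    -- skew-symmetry
    have hskew : ∀ x y : M, β y x = - β x y := by
      intro x y
      have h := halt (x + y)
      simp only [map_add, AddMonoidHom.add_apply, halt x, halt y] at h
      rw [zero_add, add_zero] at h
      exact eq_neg_of_add_eq_zero_left h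
    by_cases hsub : Subsingleton M
    · exact ⟨1, by rw [Nat.card_of_subsingleton (0 : M), one_pow]⟩
    · have : Nontrivial M := not_subsingleton_iff_nontrivial.mp hsub
      obtain ⟨x₀, hx₀⟩ := exists_ne (0 : M)
      have hy₀ : ∃ y₀, β x₀ y₀ ≠ 0 := by
        by_contra h
        push_neg at h
        exact hx₀ (hnd x₀ h)
      obtain ⟨y₀, hy₀⟩ := hy₀
      obtain ⟨⟨x, y⟩, hmax⟩ := Finite.exists_max (fun zw : M × M => addOrderOf (β zw.1 zw.2))
      set c : ZMod n := β x y with hc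
      set m : ℕ := addOrderOf c with hm
      -- orders divide m
      have hdvdn : ∀ d : ZMod n, addOrderOf d ∣ n := fun d => by
        simpa [Nat.card_zmod] using _root_.addOrderOf_dvd_natCard d
      have horddvd : ∀ z w : M, addOrderOf (β z w) ∣ m := by
        intro z w
        have hd1 : addOrderOf (β z w) ∣ p ^ e := by rw [← hn]; exact hdvdn _
        have hd2 : addOrderOf c ∣ p ^ e := by rw [← hn]; exact hdvdn _
        obtain ⟨i, hi, hie⟩ := (Nat.dvd_prime_pow hp).mp hd1
        obtain ⟨j, hj, hje⟩ := (Nat.dvd_prime_pow hp).mp hd2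
        have hle : p ^ i ≤ p ^ j := by
          rw [← hie, ← hje, ← hm]; exact hmax (z, w)
        rw [hie, hm, hje]
        exact pow_dvd_pow p ((Nat.pow_le_pow_iff_right hp.one_lt).mp hle)
      have hmdvd : m ∣ n := hdvdn c
      have hm0 : m ≠ 0 := (addOrderOf_pos c).ne'
      have hm1 : 1 < m := by
        by_contra h
        push_neg at h
        have hm1' : m = 1 := le_antisymm h (Nat.one_le_iff_ne_zero.mpr hm0)
        have h2 := horddvd x₀ y₀
        rw [hm1', Nat.dvd_one, AddMonoid.addOrderOf_eq_one_iff] at h2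
        exact hy₀ h2
      have hmzero : ∀ z : M, m • z = 0 := by
        intro z
        apply hnd
        intro w
        have : β (m • z) w = m • β z w := by simp [map_nsmul]
        rw [this]
        exact addOrderOf_dvd_iff_nsmul_eq_zero.mp (horddvd z w)
      -- the hom to ZMod n × ZMod n
      set φ : M →+ ZMod n × ZMod n := (β x).prod (β y) with hφ
      have hrange : φ.range = (zmultiples c).prod (zmultiples c) := by
        apply le_antisymm
        · rintro _ ⟨w, rfl⟩
          constructor
          · exact stmt8_torsion_mem hn0 hmdvd hm0 hm.symm (horddvd x w)
          · exact stmt8_torsion_mem hn0 hmdvd hm0 hm.symm (horddvd y w)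
        · rintro ⟨z1, z2⟩ ⟨⟨a, ha⟩, ⟨b, hb⟩⟩
          refine ⟨a • y - b • x, ?_⟩
          have h1 : β x (a • y - b • x) = z1 := by
            rw [map_sub, map_zsmul, map_zsmul, halt, smul_zero, sub_zero]; exact ha
          have h2 : β y (a • y - b • x) = z2 := by
            rw [map_sub, map_zsmul, map_zsmul, halt, hskew x y, smul_zero, zero_sub,
              smul_neg, neg_neg]
            exact hb
          simp only [hφ, AddMonoidHom.prod_apply, Prod.ext_iff]
          exact ⟨h1, h2⟩
      have hcardS : Nat.card ((zmultiples c).prod (zmultiples c)) = m * m := by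
        rw [Nat.card_congr (AddSubgroup.prodEquiv (zmultiples c) (zmultiples c)).toEquiv,
          Nat.card_prod, Nat.card_zmultiples, ← hm]
      set K := φ.ker with hK
      have hcardM : Nat.card M = Nat.card K * (m * m) := by
        have h1 := AddSubgroup.card_eq_card_quotient_mul_card_addSubgroup K
        have h2 : Nat.card (M ⧸ K) = Nat.card φ.range :=
          Nat.card_congr (QuotientAddGroup.quotientKerEquivRange φ).toEquiv
        rw [h1, h2, hrange, hcardS, Nat.mul_comm]
      -- membership in K
      have hKmem : ∀ z : M, z ∈ K ↔ β x z = 0 ∧ β y z = 0 := by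
        intro z
        rw [hK, AddMonoidHom.mem_ker, hφ, AddMonoidHom.prod_apply, Prod.ext_iff]
        rfl
      -- decomposition of arbitrary elements
      have hdecomp : ∀ w : M, ∃ k, k ∈ K ∧ ∃ a b : ℤ, w = k + (a • y - b • x) := by
        intro w
        have hw : φ w ∈ φ.range := ⟨w, rfl⟩
        rw [hrange] at hw
        obtain ⟨⟨a, ha⟩, ⟨b, hb⟩⟩ := hw
        have h1 : β x (a • y - b • x) = (φ w).1 := by
          rw [map_sub, map_zsmul, map_zsmul, halt, smul_zero, sub_zero]; exact ha
        have h2 : β y (a • y - b • x) = (φ w).2 := by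
          rw [map_sub, map_zsmul, map_zsmul, halt, hskew x y, smul_zero, zero_sub,
            smul_neg, neg_neg]
          exact hb
        refine ⟨w - (a • y - b • x), ?_, a, b, by abel⟩
        rw [hKmem]
        constructor
        · rw [map_sub, h1]; exact sub_eq_zero_of_eq rfl
        · rw [map_sub, h2]; exact sub_eq_zero_of_eq rfl
      -- restricted form on K
      set βK : K →+ K →+ ZMod n := AddMonoidHom.mk'
        (fun z => (β z.1).comp K.subtype)
        (fun a b => by ext w; simp [map_add]) with hβK
      have haltK : ∀ z : K, βK z z = 0 := fun z => halt z.1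
      have hndK : ∀ z : K, (∀ w : K, βK z w = 0) → z = 0 := by
        intro z hz
        have hzx : β x z.1 = 0 := ((hKmem z.1).mp z.2).1
        have hzy : β y z.1 = 0 := ((hKmem z.1).mp z.2).2
        have hzall : ∀ w : M, β z.1 w = 0 := by
          intro w
          obtain ⟨k, hk, a, b, rfl⟩ := hdecomp w
          have e1 : β z.1 k = 0 := hz ⟨k, hk⟩
          have e2 : β z.1 (a • y - b • x) = 0 := by
            rw [map_sub, map_zsmul, map_zsmul, hskew y z.1, hskew x z.1, hzx, hzy]
            simp
          rw [map_add, e1, e2, add_zero]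
        exact Subtype.ext (hnd z.1 hzall)
      -- apply the induction hypothesis
      have hKlt : Nat.card K ≤ N := by
        have hKpos := Nat.card_pos (α := K)
        have h4 : 4 ≤ m * m := Nat.mul_le_mul hm1 hm1
        have h5 : Nat.card K * 4 ≤ Nat.card K * (m * m) := Nat.mul_le_mul_left _ h4
        omega
      obtain ⟨r, hr⟩ := ih n e hn K hKlt βK haltK hndK
      exact ⟨r * m, by rw [hcardM, hr]; ring⟩


/-- Let `G` be a finite p-group with `[G,G]` central and cyclic.  Then the
commutator map induces a well-defined, alternating, bilinear and
nondegenerate form on `Q = G/Z(G)`; in particular `|G/Z(G)|` is a perfect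
square. -/
theorem stmt8 {p : ℕ} (hp : p.Prime) {G : Type*} [Group G] [Finite G]
    (hG : IsPGroup p G) (hcentral : commutator G ≤ Subgroup.center G)
    (hcyc : IsCyclic (commutator G)) :
    -- well-defined on Q = G/Z(G):
    (∀ g₁ g₂ z₁ z₂ : G, z₁ ∈ Subgroup.center G → z₂ ∈ Subgroup.center G →
      ⁅g₁ * z₁, g₂ * z₂⁆ = ⁅g₁, g₂⁆) ∧
    -- bilinear:
    (∀ g₁ g₂ h : G, ⁅g₁ * g₂, h⁆ = ⁅g₁, h⁆ * ⁅g₂, h⁆) ∧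
    (∀ g h₁ h₂ : G, ⁅g, h₁ * h₂⁆ = ⁅g, h₁⁆ * ⁅g, h₂⁆) ∧
    -- alternating:
    (∀ g : G, ⁅g, g⁆ = 1) ∧
    -- nondegenerate:
    (∀ g : G, (∀ h : G, ⁅g, h⁆ = 1) → g ∈ Subgroup.center G) ∧
    -- the order of G/Z(G) is a perfect square:
    (∃ r : ℕ, Nat.card (G ⧸ Subgroup.center G) = r ^ 2) := by
  have hc_mem : ∀ g h : G, ⁅g, h⁆ ∈ commutator G := fun g h => by
    rw [commutator_def]
    exact Subgroup.commutator_mem_commutator (Subgroup.mem_top g) (Subgroup.mem_top h)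
  have hc_cent : ∀ g h : G, ⁅g, h⁆ ∈ Subgroup.center G := fun g h => hcentral (hc_mem g h)
  have hcomm : ∀ z : G, z ∈ Subgroup.center G → ∀ a : G, a * z = z * a :=
    fun z hz => Subgroup.mem_center_iff.mp hz
  -- left bilinearity
  have hbl : ∀ g₁ g₂ h : G, ⁅g₁ * g₂, h⁆ = ⁅g₁, h⁆ * ⁅g₂, h⁆ := by
    intro g₁ g₂ h
    calc ⁅g₁ * g₂, h⁆ = g₁ * ⁅g₂, h⁆ * g₁⁻¹ * ⁅g₁, h⁆ := by group
      _ = ⁅g₂, h⁆ * g₁ * g₁⁻¹ * ⁅g₁, h⁆ := by rw [hcomm _ (hc_cent g₂ h) g₁]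
      _ = ⁅g₂, h⁆ * ⁅g₁, h⁆ := by group
      _ = ⁅g₁, h⁆ * ⁅g₂, h⁆ := (hcomm _ (hc_cent g₂ h) ⁅g₁, h⁆).symm
  -- right bilinearity
  have hbr : ∀ g h₁ h₂ : G, ⁅g, h₁ * h₂⁆ = ⁅g, h₁⁆ * ⁅g, h₂⁆ := by
    intro g h₁ h₂
    calc ⁅g, h₁ * h₂⁆ = ⁅g, h₁⁆ * (h₁ * ⁅g, h₂⁆ * h₁⁻¹) := by group
      _ = ⁅g, h₁⁆ * (⁅g, h₂⁆ * h₁ * h₁⁻¹) := by rw [hcomm _ (hc_cent g h₂) h₁]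
      _ = ⁅g, h₁⁆ * ⁅g, h₂⁆ := by group
  have halt : ∀ g : G, ⁅g, g⁆ = 1 := fun g => by group
  have hz_left : ∀ z : G, z ∈ Subgroup.center G → ∀ h : G, ⁅z, h⁆ = 1 := by
    intro z hz h
    exact commutatorElement_eq_one_iff_commute.mpr ((Subgroup.mem_center_iff.mp hz h).symm)
  have hz_right : ∀ z : G, z ∈ Subgroup.center G → ∀ h : G, ⁅h, z⁆ = 1 := by
    intro z hz h
    exact commutatorElement_eq_one_iff_commute.mpr (Subgroup.mem_center_iff.mp hz h)
  have hwd : ∀ g₁ g₂ z₁ z₂ : G, z₁ ∈ Subgroup.center G → z₂ ∈ Subgroup.center G →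
      ⁅g₁ * z₁, g₂ * z₂⁆ = ⁅g₁, g₂⁆ := by
    intro g₁ g₂ z₁ z₂ hz₁ hz₂
    rw [hbl, hbr, hbr, hz_left z₁ hz₁, hz_left z₁ hz₁, hz_right z₂ hz₂, mul_one, mul_one,
      mul_one]
  have hnd : ∀ g : G, (∀ h : G, ⁅g, h⁆ = 1) → g ∈ Subgroup.center G := by
    intro g hg
    exact Subgroup.mem_center_iff.mpr fun h =>
      ((commutatorElement_eq_one_iff_commute.mp (hg h)).symm).eq
  refine ⟨hwd, hbl, hbr, halt, hnd, ?_⟩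
  -- the perfect-square part
  haveI := Fact.mk hp
  obtain ⟨e, he⟩ := IsPGroup.iff_card.mp (hG.to_subgroup (commutator G))
  set n := Nat.card (commutator G) with hn
  set χ := (zmodCyclicMulEquiv hcyc).symm with hχ
  set f2 : G → G → ZMod n := fun g h => Multiplicative.toAdd (χ ⟨⁅g, h⁆, hc_mem g h⟩) with hf2
  have hf2l : ∀ g₁ g₂ h : G, f2 (g₁ * g₂) h = f2 g₁ h + f2 g₂ h := by
    intro g₁ g₂ h
    have h1 : (⟨⁅g₁ * g₂, h⁆, hc_mem _ _⟩ : commutator G) =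
        ⟨⁅g₁, h⁆, hc_mem _ _⟩ * ⟨⁅g₂, h⁆, hc_mem _ _⟩ := Subtype.ext (hbl g₁ g₂ h)
    simp only [hf2, h1, map_mul]
    rfl
  have hf2r : ∀ g h₁ h₂ : G, f2 g (h₁ * h₂) = f2 g h₁ + f2 g h₂ := by
    intro g h₁ h₂
    have h1 : (⟨⁅g, h₁ * h₂⁆, hc_mem _ _⟩ : commutator G) =
        ⟨⁅g, h₁⁆, hc_mem _ _⟩ * ⟨⁅g, h₂⁆, hc_mem _ _⟩ := Subtype.ext (hbr g h₁ h₂)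
    simp only [hf2, h1, map_mul]
    rfl
  have hf2wd : ∀ g₁ g₂ z₁ z₂ : G, z₁ ∈ Subgroup.center G → z₂ ∈ Subgroup.center G →
      f2 (g₁ * z₁) (g₂ * z₂) = f2 g₁ g₂ := by
    intro g₁ g₂ z₁ z₂ hz₁ hz₂
    simp only [hf2]
    congr 1
    exact congrArg χ (Subtype.ext (hwd g₁ g₂ z₁ z₂ hz₁ hz₂))
  have hf2zero : ∀ g h : G, f2 g h = 0 ↔ ⁅g, h⁆ = 1 := by
    intro g h
    simp only [hf2]
    rw [toAdd_eq_zero]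
    constructor
    · intro h1
      have h2 : (⟨⁅g, h⁆, hc_mem g h⟩ : commutator G) = 1 := χ.injective (by rw [map_one]; exact h1)
      simpa using Subtype.ext_iff.mp h2
    · intro h1
      have h2 : (⟨⁅g, h⁆, hc_mem g h⟩ : commutator G) = 1 := Subtype.ext (by simpa using h1)
      rw [h2, map_one]
  -- descend to the quotient
  set Fbar : G ⧸ Subgroup.center G → G ⧸ Subgroup.center G → ZMod n := fun a b =>
    Quotient.liftOn₂' a b f2 (by
      intro a₁ a₂ b₁ b₂ h₁ h₂
      have hz1 : a₁⁻¹ * b₁ ∈ Subgroup.center G := QuotientGroup.leftRel_apply.mp h₁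
      have hz2 : a₂⁻¹ * b₂ ∈ Subgroup.center G := QuotientGroup.leftRel_apply.mp h₂
      have e1 : b₁ = a₁ * (a₁⁻¹ * b₁) := by group
      have e2 : b₂ = a₂ * (a₂⁻¹ * b₂) := by group
      rw [e1, e2, hf2wd _ _ _ _ hz1 hz2]) with hFbar
  have hmk : ∀ g h : G, Fbar (QuotientGroup.mk g) (QuotientGroup.mk h) = f2 g h := fun g h => rfl
  have hsurj := QuotientGroup.mk_surjective (s := Subgroup.center G)
  have hFbl : ∀ a₁ a₂ b : G ⧸ Subgroup.center G, Fbar (a₁ * a₂) b = Fbar a₁ b + Fbar a₂ b := by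
    intro a₁ a₂ b
    obtain ⟨g₁, rfl⟩ := hsurj a₁
    obtain ⟨g₂, rfl⟩ := hsurj a₂
    obtain ⟨h, rfl⟩ := hsurj b
    rw [← QuotientGroup.mk_mul, hmk, hmk, hmk, hf2l]
  have hFbr : ∀ a b₁ b₂ : G ⧸ Subgroup.center G, Fbar a (b₁ * b₂) = Fbar a b₁ + Fbar a b₂ := by
    intro a b₁ b₂
    obtain ⟨g, rfl⟩ := hsurj a
    obtain ⟨h₁, rfl⟩ := hsurj b₁
    obtain ⟨h₂, rfl⟩ := hsurj b₂
    rw [← QuotientGroup.mk_mul, hmk, hmk, hmk, hf2r]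
  -- commutativity of the quotient
  have hmulcomm : ∀ a b : G ⧸ Subgroup.center G, a * b = b * a := by
    intro a b
    obtain ⟨g, rfl⟩ := hsurj a
    obtain ⟨h, rfl⟩ := hsurj b
    rw [← QuotientGroup.mk_mul, ← QuotientGroup.mk_mul]
    refine QuotientGroup.eq.mpr ?_
    have h1 : (g * h)⁻¹ * (h * g) = ⁅h⁻¹, g⁻¹⁆ := by group
    rw [h1]
    exact hc_cent h⁻¹ g⁻¹
  letI : AddCommGroup (Additive (G ⧸ Subgroup.center G)) :=
    { (inferInstance : AddGroup (Additive (G ⧸ Subgroup.center G))) with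
      add_comm := fun a b => hmulcomm a b }
  haveI : Finite (G ⧸ Subgroup.center G) := Quotient.finite _
  haveI : Finite (Additive (G ⧸ Subgroup.center G)) :=
    Finite.of_equiv _ Additive.ofMul
  set β : Additive (G ⧸ Subgroup.center G) →+ Additive (G ⧸ Subgroup.center G) →+ ZMod n :=
    AddMonoidHom.mk' (fun a => AddMonoidHom.mk' (fun b => Fbar a.toMul b.toMul)
        (fun b₁ b₂ => hFbr a.toMul b₁.toMul b₂.toMul))
      (fun a₁ a₂ => by ext w; exact hFbl a₁.toMul a₂.toMul _) with hβ
  have haltβ : ∀ x, β x x = 0 := by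
    intro x
    obtain ⟨g, hg⟩ := hsurj x.toMul
    show Fbar x.toMul x.toMul = 0
    rw [← hg, hmk, hf2zero]
    exact halt g
  have hndβ : ∀ x, (∀ y, β x y = 0) → x = 0 := by
    intro x hx
    obtain ⟨g, hg⟩ := hsurj x.toMul
    have hcg : g ∈ Subgroup.center G := by
      apply hnd
      intro h
      have := hx (Additive.ofMul (QuotientGroup.mk h))
      rw [← hf2zero g h, ← hmk, hg]
      exact this
    have : x.toMul = 1 := by rw [← hg, QuotientGroup.eq_one_iff]; exact hcg
    exact toMul_eq_one.mp this
  obtain ⟨r, hr⟩ := stmt8_card_sq_aux hp (Nat.card (Additive (G ⧸ Subgroup.center G))) n e he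
    (Additive (G ⧸ Subgroup.center G)) le_rfl β haltβ hndβ
  refine ⟨r, ?_⟩
  rw [← hr]
  exact Nat.card_congr Additive.ofMul
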